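/- arXiv:hep-th/0501140 — 2 statements merged into one kernel-verified Lean document; each statement's English description precedes it below -/
import Mathlib

section
/- The Temperley-Lieb generators e_i on path space satisfy e_i e_{i+1} e_i = (1/β²) e_i. -/
open Finset

/-- Elementary paths of length `L` on the graph `G`: sequences of `L+1`
pairwise-adjacent consecutive vertices. -/
abbrev PathsOn {V : Type*} (G : SimpleGraph V) (L : ℕ) : Type _ :=
  {p : Fin (L + 1) → V // ∀ k : Fin L, G.Adj (p k.castSucc) (p k.succ)}

/-- The Temperley-Lieb generator `e_i` acting on elementary paths of length `L`:
`e_i |⋯ v_i v_{i+1} v_{i+2} ⋯⟩ = (1/β) δ_{v_i v_{i+2}} Σ_{v'}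
 √(μ_{v_{i+1}} μ_{v'} / (μ_{v_i} μ_{v_{i+2}})) |⋯ v_i v' v_{i+2} ⋯⟩`,
written as a matrix in the orthonormal basis of elementary paths. -/
noncomputable def TLmat {V : Type*} [DecidableEq V] (G : SimpleGraph V)
    (μ : V → ℝ) (β : ℝ) (L i : ℕ) (hi : i + 2 ≤ L) :
    Matrix (PathsOn G L) (PathsOn G L) ℝ :=
  fun q p =>
    if (p.1 ⟨i, by omega⟩ = p.1 ⟨i + 2, by omega⟩) ∧
        (∀ k : Fin (L + 1), (k : ℕ) ≠ i + 1 → q.1 k = p.1 k) then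
      (1 / β) * Real.sqrt (μ (p.1 ⟨i + 1, by omega⟩) * μ (q.1 ⟨i + 1, by omega⟩) /
        (μ (p.1 ⟨i, by omega⟩) * μ (p.1 ⟨i + 2, by omega⟩)))
    else 0

theorem TLmat_pos {V : Type*} [DecidableEq V] (G : SimpleGraph V)
    (μ : V → ℝ) (β : ℝ) {L i : ℕ} (hi : i + 2 ≤ L) {q p : PathsOn G L}
    (h : (p.1 ⟨i, by omega⟩ = p.1 ⟨i + 2, by omega⟩) ∧
        (∀ k : Fin (L + 1), (k : ℕ) ≠ i + 1 → q.1 k = p.1 k)) :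
    TLmat G μ β L i hi q p =
      (1 / β) * Real.sqrt (μ (p.1 ⟨i + 1, by omega⟩) * μ (q.1 ⟨i + 1, by omega⟩) /
        (μ (p.1 ⟨i, by omega⟩) * μ (p.1 ⟨i + 2, by omega⟩))) := if_pos h

theorem TLmat_neg {V : Type*} [DecidableEq V] (G : SimpleGraph V)
    (μ : V → ℝ) (β : ℝ) {L i : ℕ} (hi : i + 2 ≤ L) {q p : PathsOn G L}
    (h : ¬ ((p.1 ⟨i, by omega⟩ = p.1 ⟨i + 2, by omega⟩) ∧
        (∀ k : Fin (L + 1), (k : ℕ) ≠ i + 1 → q.1 k = p.1 k))) :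
    TLmat G μ β L i hi q p = 0 := if_neg h

/-- The Temperley-Lieb generators satisfy `e_i e_{i+1} e_i = (1/β²) e_i`. -/
theorem tl_braid_relation {V : Type*} [Fintype V] [DecidableEq V]
    (G : SimpleGraph V) [DecidableRel G.Adj]
    (μ : V → ℝ) (β : ℝ) (hβ : 0 < β) (hpos : ∀ w, 0 < μ w)
    (heig : ∀ u, ∑ w ∈ G.neighborFinset u, μ w = β * μ u)
    (L i : ℕ) (hi : i + 3 ≤ L) :
    TLmat G μ β L i (by omega) * TLmat G μ β L (i + 1) (by omega) *
        TLmat G μ β L i (by omega)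
      = (1 / β ^ 2) • TLmat G μ β L i (by omega) := by
  have hμ : ∀ w, (0:ℝ) ≤ μ w := fun w => (hpos w).le
  ext q p
  simp only [Matrix.mul_apply, Matrix.smul_apply, smul_eq_mul]
  by_cases hc : (p.1 ⟨i, by omega⟩ = p.1 ⟨i + 2, by omega⟩) ∧
      (∀ k : Fin (L + 1), (k : ℕ) ≠ i + 1 → q.1 k = p.1 k)
  · -- main case
    obtain ⟨hpp, hqp⟩ := hc
    have hadj23 : G.Adj (p.1 ⟨i + 2, by omega⟩) (p.1 ⟨i + 3, by omega⟩) :=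
      p.2 ⟨i + 2, by omega⟩
    -- the intermediate path
    have hadjS : ∀ k : Fin L, G.Adj
        ((fun k : Fin (L+1) => if (k:ℕ) = i + 1 then p.1 ⟨i + 3, by omega⟩ else p.1 k) k.castSucc)
        ((fun k : Fin (L+1) => if (k:ℕ) = i + 1 then p.1 ⟨i + 3, by omega⟩ else p.1 k) k.succ) := by
      intro k
      simp only
      by_cases h1 : (k:ℕ) = i
      · rw [if_neg (show ((k.castSucc : Fin (L+1)) : ℕ) ≠ i + 1 by
            rw [Fin.coe_castSucc]; omega),
          if_pos (show ((k.succ : Fin (L+1)) : ℕ) = i + 1 by rw [Fin.val_succ]; omega)]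
        have hk : k.castSucc = ⟨i, by omega⟩ := Fin.ext (by simp [h1])
        rw [hk, hpp]
        exact hadj23
      · by_cases h2 : (k:ℕ) = i + 1
        · rw [if_pos (show ((k.castSucc : Fin (L+1)) : ℕ) = i + 1 by
              rw [Fin.coe_castSucc]; omega),
            if_neg (show ((k.succ : Fin (L+1)) : ℕ) ≠ i + 1 by rw [Fin.val_succ]; omega)]
          have hk : k.succ = ⟨i + 2, by omega⟩ := Fin.ext (by simp [h2])
          rw [hk]
          exact hadj23.symm
        · rw [if_neg (show ((k.castSucc : Fin (L+1)) : ℕ) ≠ i + 1 by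
              rw [Fin.coe_castSucc]; omega),
            if_neg (show ((k.succ : Fin (L+1)) : ℕ) ≠ i + 1 by rw [Fin.val_succ]; omega)]
          exact p.2 k
    set s0 : PathsOn G L :=
      ⟨fun k : Fin (L+1) => if (k:ℕ) = i + 1 then p.1 ⟨i + 3, by omega⟩ else p.1 k, hadjS⟩
      with hs0def
    have hs0ne : ∀ k : Fin (L+1), (k:ℕ) ≠ i + 1 → s0.1 k = p.1 k := fun k hk => if_neg hk
    have hs0mid : s0.1 ⟨i + 1, by omega⟩ = p.1 ⟨i + 3, by omega⟩ := if_pos rfl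
    rw [Finset.sum_eq_single_of_mem s0 (Finset.mem_univ s0) ?outer]
    rw [Finset.sum_eq_single_of_mem s0 (Finset.mem_univ s0) ?inner]
    case inner =>
      intro r _ hr
      by_cases hB : (s0.1 ⟨i + 1, by omega⟩ = s0.1 ⟨i + 1 + 2, by omega⟩) ∧
          (∀ k : Fin (L + 1), (k : ℕ) ≠ i + 1 + 1 → r.1 k = s0.1 k)
      · by_cases hA2 : (r.1 ⟨i, by omega⟩ = r.1 ⟨i + 2, by omega⟩) ∧
            (∀ k : Fin (L + 1), (k : ℕ) ≠ i + 1 → q.1 k = r.1 k)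
        · exfalso
          apply hr
          apply Subtype.ext
          funext k
          by_cases hk : (k:ℕ) = i + 1 + 1
          · have hke : k = ⟨i + 1 + 1, by omega⟩ := Fin.ext hk
            rw [hke]
            calc r.1 ⟨i + 1 + 1, by omega⟩ = r.1 ⟨i, by omega⟩ := hA2.1.symm
              _ = s0.1 ⟨i, by omega⟩ := hB.2 _ (show i ≠ i + 1 + 1 by omega)
              _ = p.1 ⟨i, by omega⟩ := hs0ne _ (show i ≠ i + 1 by omega)
              _ = p.1 ⟨i + 2, by omega⟩ := hpp
              _ = s0.1 ⟨i + 1 + 1, by omega⟩ := (hs0ne _ (show i + 2 ≠ i + 1 by omega)).symm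
          · exact hB.2 k hk
        · rw [TLmat_neg G μ β _ hA2, zero_mul]
      · rw [TLmat_neg G μ β _ hB, mul_zero]
    case outer =>
      intro s _ hs
      by_cases hA : (p.1 ⟨i, by omega⟩ = p.1 ⟨i + 2, by omega⟩) ∧
          (∀ k : Fin (L + 1), (k : ℕ) ≠ i + 1 → s.1 k = p.1 k)
      · refine mul_eq_zero_of_left (Finset.sum_eq_zero fun r _ => ?_) _
        by_cases hB : (s.1 ⟨i + 1, by omega⟩ = s.1 ⟨i + 1 + 2, by omega⟩) ∧
            (∀ k : Fin (L + 1), (k : ℕ) ≠ i + 1 + 1 → r.1 k = s.1 k)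
        · exfalso
          apply hs
          apply Subtype.ext
          funext k
          by_cases hk : (k:ℕ) = i + 1
          · have hke : k = ⟨i + 1, by omega⟩ := Fin.ext hk
            rw [hke]
            calc s.1 ⟨i + 1, by omega⟩ = s.1 ⟨i + 1 + 2, by omega⟩ := hB.1
              _ = p.1 ⟨i + 3, by omega⟩ := hA.2 _ (show i + 3 ≠ i + 1 by omega)
              _ = s0.1 ⟨i + 1, by omega⟩ := hs0mid.symm
          · exact (hA.2 k hk).trans (hs0ne k hk).symm
        · rw [TLmat_neg G μ β _ hB, mul_zero]
      · rw [TLmat_neg G μ β _ hA, mul_zero]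
    -- now evaluate the three matrix entries
    have hQ : (s0.1 ⟨i, by omega⟩ = s0.1 ⟨i + 2, by omega⟩) ∧
        (∀ k : Fin (L + 1), (k : ℕ) ≠ i + 1 → q.1 k = s0.1 k) := by
      constructor
      · calc s0.1 ⟨i, by omega⟩ = p.1 ⟨i, by omega⟩ := hs0ne _ (show i ≠ i + 1 by omega)
          _ = p.1 ⟨i + 2, by omega⟩ := hpp
          _ = s0.1 ⟨i + 2, by omega⟩ := (hs0ne _ (show i + 2 ≠ i + 1 by omega)).symm
      · exact fun k hk => (hqp k hk).trans (hs0ne k hk).symm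
    have hB2 : (s0.1 ⟨i + 1, by omega⟩ = s0.1 ⟨i + 1 + 2, by omega⟩) ∧
        (∀ k : Fin (L + 1), (k : ℕ) ≠ i + 1 + 1 → s0.1 k = s0.1 k) :=
      ⟨hs0mid.trans (hs0ne ⟨i + 1 + 2, by omega⟩ (show i + 3 ≠ i + 1 by omega)).symm,
        fun k _ => rfl⟩
    have hP : (p.1 ⟨i, by omega⟩ = p.1 ⟨i + 2, by omega⟩) ∧
        (∀ k : Fin (L + 1), (k : ℕ) ≠ i + 1 → s0.1 k = p.1 k) := ⟨hpp, hs0ne⟩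
    rw [TLmat_pos G μ β _ hQ, TLmat_pos G μ β _ hB2, TLmat_pos G μ β _ hP,
      TLmat_pos G μ β _ ⟨hpp, hqp⟩]
    have e1 : s0.1 ⟨i + 1, by omega⟩ = p.1 ⟨i + 3, by omega⟩ := hs0mid
    have e2 : s0.1 ⟨i, by omega⟩ = p.1 ⟨i, by omega⟩ :=
      hs0ne _ (show i ≠ i + 1 by omega)
    have e3 : s0.1 ⟨i + 1 + 1, by omega⟩ = p.1 ⟨i + 2, by omega⟩ :=
      hs0ne _ (show i + 2 ≠ i + 1 by omega)
    have e3' : s0.1 ⟨i + 2, by omega⟩ = p.1 ⟨i + 2, by omega⟩ :=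
      hs0ne _ (show i + 2 ≠ i + 1 by omega)
    have e4 : s0.1 ⟨i + 1 + 2, by omega⟩ = p.1 ⟨i + 3, by omega⟩ :=
      hs0ne _ (show i + 3 ≠ i + 1 by omega)
    simp only [e1, e2, e3, e3', e4]
    rw [← hpp]
    have hfin : ∀ X Y Z W : ℝ, X * Y * Z = W →
        (1 / β * X) * (1 / β * Y) * (1 / β * Z) = 1 / β ^ 2 * (1 / β * W) := by
      intro X Y Z W h
      rw [← h]; ring
    apply hfin
    have ha := hpos (p.1 ⟨i, by omega⟩)
    have hb := hμ (p.1 ⟨i + 1, by omega⟩)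
    have hcpos := hpos (p.1 ⟨i + 3, by omega⟩)
    have hz := hμ (q.1 ⟨i + 1, by omega⟩)
    rw [← Real.sqrt_mul (div_nonneg (mul_nonneg hcpos.le hz)
        (mul_nonneg ha.le ha.le)),
      ← Real.sqrt_mul (mul_nonneg (div_nonneg (mul_nonneg hcpos.le hz)
        (mul_nonneg ha.le ha.le)) (div_nonneg (mul_nonneg ha.le ha.le)
        (mul_nonneg hcpos.le hcpos.le)))]
    congr 1
    have ha' : μ (p.1 ⟨i, by omega⟩) ≠ 0 := ha.ne'
    have hc' : μ (p.1 ⟨i + 3, by omega⟩) ≠ 0 := hcpos.ne'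
    field_simp
  · -- degenerate case: both sides vanish
    rw [TLmat_neg G μ β _ hc, mul_zero]
    refine Finset.sum_eq_zero fun s _ => ?_
    by_cases hA : (p.1 ⟨i, by omega⟩ = p.1 ⟨i + 2, by omega⟩) ∧
        (∀ k : Fin (L + 1), (k : ℕ) ≠ i + 1 → s.1 k = p.1 k)
    · refine mul_eq_zero_of_left (Finset.sum_eq_zero fun r _ => ?_) _
      by_cases hB : (s.1 ⟨i + 1, by omega⟩ = s.1 ⟨i + 1 + 2, by omega⟩) ∧
          (∀ k : Fin (L + 1), (k : ℕ) ≠ i + 1 + 1 → r.1 k = s.1 k)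
      · by_cases hA2 : (r.1 ⟨i, by omega⟩ = r.1 ⟨i + 2, by omega⟩) ∧
            (∀ k : Fin (L + 1), (k : ℕ) ≠ i + 1 → q.1 k = r.1 k)
        · exfalso
          apply hc
          refine ⟨hA.1, fun k hk => ?_⟩
          by_cases hk2 : (k:ℕ) = i + 2
          · have hke : k = ⟨i + 2, by omega⟩ := Fin.ext hk2
            rw [hke]
            calc q.1 ⟨i + 2, by omega⟩ = r.1 ⟨i + 2, by omega⟩ :=
                hA2.2 _ (show i + 2 ≠ i + 1 by omega)
              _ = r.1 ⟨i, by omega⟩ := hA2.1.symm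
              _ = s.1 ⟨i, by omega⟩ := hB.2 _ (show i ≠ i + 1 + 1 by omega)
              _ = p.1 ⟨i, by omega⟩ := hA.2 _ (show i ≠ i + 1 by omega)
              _ = p.1 ⟨i + 2, by omega⟩ := hA.1
          · rw [hA2.2 k hk, hB.2 k (by omega), hA.2 k hk]
        · rw [TLmat_neg G μ β _ hA2, zero_mul]
      · rw [TLmat_neg G μ β _ hB, mul_zero]
    · rw [TLmat_neg G μ β _ hA, mul_zero]
end

section
/- For the path graph A_n (n ≥ 2) and each l = 0, 1, ..., n−1, the assignment C_l(v_1, v_2) = N^l_{v_1 v_2} given by the fused adjacency matrices N^l = U_l(M) (Chebyshev polynomial of second kind evaluated at the adjacency matrix M of A_n) has all entries in {0,1} and satisfies the consistency equation Σ_{i=0}^{n-1} (−1)^{x_i} (μ_i/μ_{v(x_i)}) C_l(i, v(x_i)) = 0 for every pair of adjacent vertices v, v' of A_n, where x_i = i mod 2, v(0)=v if v is even-coloured, v(1)=v'. -/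
open Finset

/-- The adjacency matrix of the path graph `A_n`. -/
def pathAdj (n : ℕ) : Matrix (Fin n) (Fin n) ℝ :=
  fun i j => if (i : ℕ) + 1 = (j : ℕ) ∨ (j : ℕ) + 1 = (i : ℕ) then 1 else 0

/-- The fused adjacency matrices `N^l = U_l(M)` of `A_n`: `N^0 = I`, `N^1 = M`,
`N^{l+2} = M N^{l+1} − N^l` (Chebyshev recursion). -/
def fusedAdj (n : ℕ) : ℕ → Matrix (Fin n) (Fin n) ℝ
  | 0 => 1
  | 1 => pathAdj n
  | (l + 2) => pathAdj n * fusedAdj n (l + 1) - fusedAdj n l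

lemma sum_mul_path (n : ℕ) (f : Fin n → ℝ) (j : Fin n) :
    ∑ i, f i * pathAdj n i j =
      (if h : (j:ℕ) + 1 < n then f ⟨(j:ℕ)+1, h⟩ else 0) +
      (if h : 0 < (j:ℕ) then f ⟨(j:ℕ)-1, lt_of_le_of_lt (Nat.sub_le _ _) j.isLt⟩ else 0) := by
  have step : ∀ i : Fin n, f i * pathAdj n i j =
      (if (j:ℕ) + 1 = (i:ℕ) then f i else 0) + (if (i:ℕ) + 1 = (j:ℕ) then f i else 0) := by
    intro i
    unfold pathAdj
    split_ifs <;> (first | ring1 | (exfalso; omega))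
  rw [Finset.sum_congr rfl fun i _ => step i, Finset.sum_add_distrib]
  congr 1
  · by_cases h : (j:ℕ) + 1 < n
    · rw [dif_pos h]
      rw [Finset.sum_eq_single (⟨(j:ℕ)+1, h⟩ : Fin n)]
      · simp
      · intro b _ hb
        rw [if_neg]
        intro hc
        exact hb (Fin.ext (by simpa using hc.symm))
      · simp
    · rw [dif_neg h, Finset.sum_eq_zero]
      intro i _
      rw [if_neg]
      intro hc
      exact h (hc ▸ i.isLt)
  · by_cases h : 0 < (j:ℕ)
    · rw [dif_pos h]
      rw [Finset.sum_eq_single (⟨(j:ℕ)-1, lt_of_le_of_lt (Nat.sub_le _ _) j.isLt⟩ : Fin n)]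
      · rw [if_pos (by simp; omega)]
      · intro b _ hb
        rw [if_neg]
        intro hc
        exact hb (Fin.ext (by simp; omega))
      · simp
    · rw [dif_neg h, Finset.sum_eq_zero]
      intro i _
      rw [if_neg]
      omega

lemma path_mul (n : ℕ) (A : Matrix (Fin n) (Fin n) ℝ) (i j : Fin n) :
    (pathAdj n * A) i j =
      (if h : (i:ℕ) + 1 < n then A ⟨(i:ℕ)+1, h⟩ j else 0) +
      (if h : 0 < (i:ℕ) then A ⟨(i:ℕ)-1, lt_of_le_of_lt (Nat.sub_le _ _) i.isLt⟩ j else 0) := by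
  rw [Matrix.mul_apply]
  have : ∀ k, pathAdj n i k * A k j = (fun k => A k j) k * pathAdj n k i := by
    intro k
    have hsym : pathAdj n i k = pathAdj n k i := by
      unfold pathAdj; exact if_congr or_comm rfl rfl
    rw [hsym]; ring
  rw [Finset.sum_congr rfl fun k _ => this k]
  exact sum_mul_path n (fun k => A k j) i

def cheb (x : ℝ) : ℕ → ℝ
  | 0 => 1
  | 1 => x
  | (l + 2) => x * cheb x (l + 1) - cheb x l

lemma row_eigen (n : ℕ) (ν : Fin n → ℝ) (x : ℝ)
    (hx : ∀ j, ∑ i, ν i * pathAdj n i j = x * ν j) :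
    ∀ l (j : Fin n), ∑ i, ν i * fusedAdj n l i j = cheb x l * ν j := by
  intro l
  induction l using Nat.strong_induction_on with
  | _ l ih =>
    match l with
    | 0 =>
      intro j
      simp [fusedAdj, cheb, Matrix.one_apply, mul_ite]
    | 1 =>
      intro j
      simpa [fusedAdj, cheb] using hx j
    | (l + 2) =>
      intro j
      have h1 := ih (l + 1) (by omega)
      have h0 := ih l (by omega)
      show ∑ i, ν i * (pathAdj n * fusedAdj n (l+1) - fusedAdj n l) i j = _
      simp only [Matrix.sub_apply, Matrix.mul_apply, mul_sub, Finset.sum_sub_distrib]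
      have key : ∑ i, ν i * ∑ k, pathAdj n i k * fusedAdj n (l+1) k j
          = x * (cheb x (l+1) * ν j) := by
        calc ∑ i, ν i * ∑ k, pathAdj n i k * fusedAdj n (l+1) k j
            = ∑ i, ∑ k, ν i * pathAdj n i k * fusedAdj n (l+1) k j := by
              refine Finset.sum_congr rfl fun i _ => ?_
              rw [Finset.mul_sum]
              exact Finset.sum_congr rfl fun k _ => by ring
          _ = ∑ k, (∑ i, ν i * pathAdj n i k) * fusedAdj n (l+1) k j := by
              rw [Finset.sum_comm]
              exact Finset.sum_congr rfl fun k _ => (Finset.sum_mul _ _ _).symm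
          _ = ∑ k, x * (ν k * fusedAdj n (l+1) k j) := by
              refine Finset.sum_congr rfl fun k _ => ?_
              rw [hx k]; ring
          _ = x * (cheb x (l+1) * ν j) := by
              rw [← Finset.mul_sum, h1 j]
      rw [key, h0 j]
      rw [show cheb x (l+2) = x * cheb x (l+1) - cheb x l from rfl]
      ring

lemma fused_parity (n : ℕ) : ∀ l (i j : Fin n),
    ((i:ℕ) + (j:ℕ) + l) % 2 = 1 → fusedAdj n l i j = 0 := by
  intro l
  induction l using Nat.strong_induction_on with
  | _ l ih =>
    match l with
    | 0 =>
      intro i j h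
      have : ¬ i = j := by intro e; subst e; omega
      simp [fusedAdj, Matrix.one_apply, this]
    | 1 =>
      intro i j h
      show pathAdj n i j = 0
      unfold pathAdj
      rw [if_neg]; omega
    | (l + 2) =>
      intro i j h
      show (pathAdj n * fusedAdj n (l+1) - fusedAdj n l) i j = 0
      rw [Matrix.sub_apply, path_mul]
      rw [ih l (by omega) i j (by omega)]
      have z1 : ∀ (hh : (i:ℕ)+1 < n),
          fusedAdj n (l+1) ⟨(i:ℕ)+1, hh⟩ j = 0 := fun hh =>
        ih (l+1) (by omega) _ j (by simp; omega)
      have z2 : ∀ (hh : 0 < (i:ℕ)),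
          fusedAdj n (l+1) ⟨(i:ℕ)-1, lt_of_le_of_lt (Nat.sub_le _ _) i.isLt⟩ j = 0 := fun hh =>
        ih (l+1) (by omega) _ j (by simp; omega)
      split_ifs with a b b <;> simp [z1, z2, *]

lemma fused_formula (n : ℕ) : ∀ l, l < n → ∀ i j : Fin n,
    fusedAdj n l i j =
      if ((i:ℕ) + (j:ℕ) + l) % 2 = 0 ∧ (i:ℕ) ≤ (j:ℕ) + l ∧ (j:ℕ) ≤ (i:ℕ) + l ∧
          l ≤ (i:ℕ) + (j:ℕ) ∧ (i:ℕ) + (j:ℕ) + l + 2 ≤ 2 * n then 1 else 0 := by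
  intro l
  induction l using Nat.strong_induction_on with
  | _ l ih =>
    match l with
    | 0 =>
      intro _ i j
      have hi := i.isLt; have hj := j.isLt
      show (1 : Matrix (Fin n) (Fin n) ℝ) i j = _
      rw [Matrix.one_apply]
      by_cases h : i = j
      · subst h; rw [if_pos rfl, if_pos (by omega)]
      · rw [if_neg h, if_neg]
        intro hc
        exact h (Fin.ext (by omega))
    | 1 =>
      intro _ i j
      have hi := i.isLt; have hj := j.isLt
      show pathAdj n i j = _
      unfold pathAdj
      split_ifs <;> first | rfl | (exfalso; omega)
    | (l + 2) =>
      intro hl i j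
      have hi := i.isLt; have hj := j.isLt
      have h1 := ih (l + 1) (by omega) (by omega)
      have h0 := ih l (by omega) (by omega)
      show (pathAdj n * fusedAdj n (l+1) - fusedAdj n l) i j = _
      rw [Matrix.sub_apply, path_mul, h0 i j]
      by_cases a : (i:ℕ) + 1 < n
      · rw [dif_pos a, h1 ⟨(i:ℕ)+1, a⟩ j]
        by_cases b : 0 < (i:ℕ)
        · rw [dif_pos b, h1 _ j]
          simp only [Fin.val_mk]
          split_ifs <;> (first | (exfalso; omega) | norm_num)
        · rw [dif_neg b]
          simp only [Fin.val_mk]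
          split_ifs <;> (first | (exfalso; omega) | norm_num)
      · rw [dif_neg a]
        by_cases b : 0 < (i:ℕ)
        · rw [dif_pos b, h1 _ j]
          simp only [Fin.val_mk]
          split_ifs <;> (first | (exfalso; omega) | norm_num)
        · rw [dif_neg b]
          split_ifs <;> (first | (exfalso; omega) | norm_num)

lemma sin_add_sin' (a b : ℝ) :
    Real.sin (a - b) + Real.sin (a + b) = 2 * Real.cos b * Real.sin a := by
  rw [Real.sin_sub, Real.sin_add]; ring

/-- For the path graph `A_n` (`n ≥ 2`) and each `l = 0, …, n−1`, the fused
adjacency matrix `N^l` has all entries in `{0,1}` and the assignment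
`C_l(v₁,v₂) = N^l_{v₁v₂}` satisfies the consistency equation
`Σ_{i} (−1)^{x_i} (μ_i/μ_{v(x_i)}) C_l(i, v(x_i)) = 0` for every pair of
adjacent vertices `v, v'` of `A_n` with `v` even-coloured, where `x_i = i mod 2`,
`v(0) = v`, `v(1) = v'`. -/
theorem fused_adjacency_solves_consistency (n : ℕ) (hn : 2 ≤ n)
    (μ : Fin n → ℝ)
    (hμ : ∀ j, μ j = Real.sin (Real.pi * (j + 1) / (n + 1)) / Real.sin (Real.pi / (n + 1)))
    (l : ℕ) (hl : l < n) :
    (∀ i j, fusedAdj n l i j = 0 ∨ fusedAdj n l i j = 1) ∧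
    (∀ v v' : Fin n,
      ((v : ℕ) + 1 = (v' : ℕ) ∨ (v' : ℕ) + 1 = (v : ℕ)) → Even (v : ℕ) →
      ∑ i : Fin n, (-1 : ℝ) ^ (i : ℕ) *
          (μ i / μ (if Even (i : ℕ) then v else v')) *
          fusedAdj n l i (if Even (i : ℕ) then v else v') = 0) := by
  constructor
  · intro i j
    rw [fused_formula n l hl i j]
    split_ifs
    · right; rfl
    · left; rfl
  · intro v v' hadj hveven
    -- setup
    set θ : ℝ := Real.pi / (n + 1) with hθdef
    have hn1 : (0:ℝ) < (n:ℝ) + 1 := by positivity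
    have hθpos : 0 < θ := by
      apply div_pos Real.pi_pos hn1
    have hnθ : ((n:ℝ) + 1) * θ = Real.pi := by
      rw [hθdef]; field_simp
    have hsθ : 0 < Real.sin θ := by
      apply Real.sin_pos_of_pos_of_lt_pi hθpos
      rw [← hnθ]
      have hn2 : (2:ℝ) ≤ (n:ℝ) := by exact_mod_cast hn
      nlinarith [hθpos, hn2]
    have hμ' : ∀ j : Fin n, μ j = Real.sin (((j:ℝ) + 1) * θ) / Real.sin θ := by
      intro j
      rw [hμ j, hθdef]
      ring_nf
    have hsinpos : ∀ j : Fin n, 0 < Real.sin (((j:ℝ) + 1) * θ) := by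
      intro j
      apply Real.sin_pos_of_pos_of_lt_pi
      · positivity
      · rw [← hnθ]
        have hcast : ((j:ℕ):ℝ) < (n:ℝ) := by exact_mod_cast j.isLt
        exact mul_lt_mul_of_pos_right (by linarith) hθpos
    have hμpos : ∀ j : Fin n, 0 < μ j := fun j => by
      rw [hμ' j]; exact div_pos (hsinpos j) hsθ
    have hμne : ∀ j : Fin n, μ j ≠ 0 := fun j => ne_of_gt (hμpos j)
    -- the sign-flipped eigenvector
    set g : ℕ → ℝ := fun m => (-1 : ℝ) ^ m * Real.sin (((m:ℝ) + 1) * θ) with hgdef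
    set ν : Fin n → ℝ := fun i => (-1 : ℝ) ^ (i:ℕ) * μ i with hνdef
    have hνg : ∀ k : Fin n, ν k = g (k:ℕ) / Real.sin θ := by
      intro k
      rw [hνdef, hgdef]
      simp only
      rw [hμ' k]
      ring
    have key : ∀ x : ℝ, Real.sin (x * θ) + Real.sin ((x + 2) * θ)
        = 2 * Real.cos θ * Real.sin ((x + 1) * θ) := by
      intro x
      have h := sin_add_sin' ((x + 1) * θ) θ
      rw [show (x + 1) * θ - θ = x * θ by ring,
          show (x + 1) * θ + θ = (x + 2) * θ by ring] at h
      exact h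
    have hgrec : ∀ m : ℕ, g (m + 2) + g m = -(2 * Real.cos θ) * g (m + 1) := by
      intro m
      have h := key ((m:ℝ) + 1)
      rw [hgdef]
      simp only
      push_cast
      rw [show ((m:ℝ) + 2 + 1) = ((m:ℝ) + 1 + 2) by ring]
      rw [show ((m:ℝ) + 1 + 1) = ((m:ℝ) + 1 + 1) by ring]
      calc (-1:ℝ)^(m+2) * Real.sin (((m:ℝ) + 1 + 2) * θ) + (-1:ℝ)^m * Real.sin (((m:ℝ)+1) * θ)
          = (-1:ℝ)^m * (Real.sin (((m:ℝ)+1) * θ) + Real.sin (((m:ℝ) + 1 + 2) * θ)) := by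
            rw [pow_add]; ring
        _ = (-1:ℝ)^m * (2 * Real.cos θ * Real.sin (((m:ℝ) + 1 + 1) * θ)) := by rw [h]
        _ = -(2 * Real.cos θ) * ((-1:ℝ)^(m+1) * Real.sin (((m:ℝ)+1+1) * θ)) := by
            rw [pow_add]; ring
    have hgn : g n = 0 := by
      rw [hgdef]
      simp only
      rw [hnθ, Real.sin_pi, mul_zero]
    have hg10 : g 1 = -(2 * Real.cos θ) * g 0 := by
      rw [hgdef]
      simp only
      push_cast
      rw [show ((1:ℝ) + 1) * θ = 2 * θ by ring, Real.sin_two_mul]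
      rw [show ((0:ℝ) + 1) * θ = θ by ring]
      ring
    have heigen : ∀ j : Fin n, ∑ i, ν i * pathAdj n i j
        = (-(2 * Real.cos θ)) * ν j := by
      intro j
      rw [sum_mul_path]
      have hj := j.isLt
      have hsne : Real.sin θ ≠ 0 := ne_of_gt hsθ
      by_cases a : (j:ℕ) + 1 < n
      · rw [dif_pos a]
        by_cases b : 0 < (j:ℕ)
        · rw [dif_pos b, hνg, hνg, hνg]
          simp only [Fin.val_mk]
          have h := hgrec ((j:ℕ) - 1)
          rw [show (j:ℕ) - 1 + 2 = (j:ℕ) + 1 by omega,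
              show (j:ℕ) - 1 + 1 = (j:ℕ) by omega] at h
          field_simp
          linarith
        · rw [dif_neg b, hνg, hνg]
          simp only [Fin.val_mk]
          have hj0 : (j:ℕ) = 0 := by omega
          rw [hj0, hg10]
          field_simp
          ring
      · rw [dif_neg a]
        by_cases b : 0 < (j:ℕ)
        · rw [dif_pos b, hνg, hνg]
          simp only [Fin.val_mk]
          have hjn : (j:ℕ) + 1 = n := by omega
          have h := hgrec ((j:ℕ) - 1)
          rw [show (j:ℕ) - 1 + 2 = (j:ℕ) + 1 by omega,
              show (j:ℕ) - 1 + 1 = (j:ℕ) by omega, hjn, hgn] at h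
          field_simp
          linarith
        · exfalso; omega
    have hrow := row_eigen n ν (-(2 * Real.cos θ)) heigen l
    have hv'odd : ¬ Even ((v':ℕ)) := by
      rcases hveven with ⟨c, hc⟩
      rcases hadj with h | h <;> · intro ⟨d, hd⟩; omega
    rcases Nat.even_or_odd l with hle | hlo
    · -- l even : termwise rewrite to the two eigen sums
      have hterm : ∀ i : Fin n,
          (-1 : ℝ) ^ (i : ℕ) * (μ i / μ (if Even (i : ℕ) then v else v')) *
            fusedAdj n l i (if Even (i : ℕ) then v else v')
          = (ν i * fusedAdj n l i v) / μ v + (ν i * fusedAdj n l i v') / μ v' := by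
        intro i
        by_cases hi : Even (i:ℕ)
        · simp only [if_pos hi]
          have hz : fusedAdj n l i v' = 0 := by
            apply fused_parity
            rcases hi with ⟨c, hc⟩
            rcases hle with ⟨d, hd⟩
            rcases Nat.even_or_odd (v':ℕ) with he | ⟨e, he⟩
            · exact absurd he hv'odd
            · omega
          rw [hz, hνdef]
          simp only
          ring
        · simp only [if_neg hi]
          have hz : fusedAdj n l i v = 0 := by
            apply fused_parity
            rcases hveven with ⟨c, hc⟩
            rcases hle with ⟨d, hd⟩
            rcases Nat.odd_iff.mp (Nat.not_even_iff_odd.mp hi) with he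
            omega
          rw [hz, hνdef]
          simp only
          ring
      rw [Finset.sum_congr rfl fun i _ => hterm i, Finset.sum_add_distrib,
          ← Finset.sum_div, ← Finset.sum_div, hrow v, hrow v']
      have e1 : ν v = μ v := by
        rw [hνdef]; simp only; rw [Even.neg_one_pow hveven, one_mul]
      have e2 : ν v' = -μ v' := by
        rw [hνdef]; simp only
        rw [Odd.neg_one_pow (Nat.not_even_iff_odd.mp hv'odd)]
        ring
      rw [e1, e2, mul_div_assoc, div_self (hμne v), mul_neg, neg_div,
          mul_div_assoc, div_self (hμne v')]
      ring
    · -- l odd : every summand vanishes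
      apply Finset.sum_eq_zero
      intro i _
      by_cases hi : Even (i:ℕ)
      · simp only [if_pos hi]
        have hz : fusedAdj n l i v = 0 := by
          apply fused_parity
          rcases hi with ⟨c, hc⟩
          rcases hveven with ⟨d, hd⟩
          rcases hlo with ⟨e, he⟩
          omega
        rw [hz, mul_zero]
      · simp only [if_neg hi]
        have hz : fusedAdj n l i v' = 0 := by
          apply fused_parity
          rcases Nat.odd_iff.mp (Nat.not_even_iff_odd.mp hi) with hc
          rcases Nat.odd_iff.mp (Nat.not_even_iff_odd.mp hv'odd) with hd
          rcases hlo with ⟨e, he⟩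
          omega
        rw [hz, mul_zero]
end
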